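/- The polynomial g(t) = t^5 + 2t^4 + 2t^3 + t^2 - 1 has a unique real root r in the open interval (0,1), and g has no other complex root of absolute value equal to r. -/

import Mathlib

private lemma aux_mono : ∀ x y : ℝ, 0 ≤ x → x < y →
    x ^ 5 + 2 * x ^ 4 + 2 * x ^ 3 + x ^ 2 - 1 < y ^ 5 + 2 * y ^ 4 + 2 * y ^ 3 + y ^ 2 - 1 := by
  intro x y hx hxy
  nlinarith [pow_lt_pow_left₀ hxy hx (by norm_num : (5:ℕ) ≠ 0), pow_lt_pow_left₀ hxy hx (by norm_num : (4:ℕ) ≠ 0),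
    pow_lt_pow_left₀ hxy hx (by norm_num : (3:ℕ) ≠ 0), pow_lt_pow_left₀ hxy hx (by norm_num : (2:ℕ) ≠ 0)]

private lemma aux_real (w : ℂ) (h : w.re = ‖w‖) : w = (‖w‖ : ℂ) := by
  have h2 : w.im = 0 := by
    have := Complex.sq_norm w
    rw [Complex.normSq_apply, ← h] at this
    nlinarith
  apply Complex.ext
  · simpa using h
  · simp [h2]

theorem stmt_4 :
    ∃ r : ℝ, r ∈ Set.Ioo (0 : ℝ) 1 ∧
      r ^ 5 + 2 * r ^ 4 + 2 * r ^ 3 + r ^ 2 - 1 = 0 ∧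
      (∀ r' : ℝ, r' ∈ Set.Ioo (0 : ℝ) 1 →
        r' ^ 5 + 2 * r' ^ 4 + 2 * r' ^ 3 + r' ^ 2 - 1 = 0 → r' = r) ∧
      (∀ z : ℂ, z ^ 5 + 2 * z ^ 4 + 2 * z ^ 3 + z ^ 2 - 1 = 0 →
        ‖z‖ = r → z = (r : ℂ)) := by
  set f : ℝ → ℝ := fun x => x ^ 5 + 2 * x ^ 4 + 2 * x ^ 3 + x ^ 2 - 1 with hf
  have hcont : ContinuousOn f (Set.Icc (0:ℝ) 1) := by fun_prop
  have hiv : Set.Ioo (f 0) (f 1) ⊆ f '' Set.Ioo 0 1 :=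
    intermediate_value_Ioo (by norm_num) hcont
  have h0 : (0:ℝ) ∈ Set.Ioo (f 0) (f 1) := by norm_num [hf]
  obtain ⟨r, hr, hfr⟩ := hiv h0
  have hfr0 : r ^ 5 + 2 * r ^ 4 + 2 * r ^ 3 + r ^ 2 - 1 = 0 := hfr
  refine ⟨r, hr, hfr0, ?_, ?_⟩
  · intro r' hr' hfr'
    rcases lt_trichotomy r' r with h | h | h
    · exact absurd (aux_mono r' r hr'.1.le h) (by rw [hfr', hfr0]; simp)
    · exact h
    · exact absurd (aux_mono r r' hr.1.le h) (by rw [hfr', hfr0]; simp)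
  · intro z hz habs
    have hrpos : 0 < r := hr.1
    have hre : (z^5).re + 2*(z^4).re + 2*(z^3).re + (z^2).re = 1 := by
      have h1 : z ^ 5 + 2 * z ^ 4 + 2 * z ^ 3 + z ^ 2 = 1 := by linear_combination hz
      have := congrArg Complex.re h1
      simpa [Complex.add_re, Complex.mul_re] using this
    have hsum : r^5 + 2*r^4 + 2*r^3 + r^2 = 1 := by linarith [hfr0]
    have hb : ∀ k : ℕ, (z^k).re ≤ r^k := by
      intro k
      calc (z^k).re ≤ ‖z^k‖ := Complex.re_le_norm _
        _ = r ^ k := by rw [norm_pow, habs]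
    have e2 : (z^2).re = r^2 := le_antisymm (hb 2) (by linarith [hb 5, hb 4, hb 3])
    have e3 : (z^3).re = r^3 := le_antisymm (hb 3) (by linarith [hb 5, hb 4, hb 2])
    have a2 : ‖z^2‖ = r^2 := by rw [norm_pow, habs]
    have a3 : ‖z^3‖ = r^3 := by rw [norm_pow, habs]
    have z2 : z^2 = ((r:ℂ))^2 := by
      have := aux_real (z^2) (by rw [e2, a2])
      rw [this, a2]; push_cast; ring
    have z3 : z^3 = ((r:ℂ))^3 := by
      have := aux_real (z^3) (by rw [e3, a3])
      rw [this, a3]; push_cast; ring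
    have hrz : (r:ℂ) ≠ 0 := by exact_mod_cast hrpos.ne'
    have : z * (r:ℂ)^2 = (r:ℂ) * (r:ℂ)^2 := by
      calc z * (r:ℂ)^2 = z * z^2 := by rw [z2]
        _ = z^3 := by ring
        _ = (r:ℂ)^3 := z3
        _ = (r:ℂ) * (r:ℂ)^2 := by ring
    exact mul_right_cancel₀ (pow_ne_zero 2 hrz) this
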